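/- arXiv:2005.00230 — 5 statements merged into one kernel-verified Lean document; each statement's English description precedes it below -/
import Mathlib

section
/- Let p, q ∈ ℝ ∪ {±∞} with p + q ≥ 0 (where +∞ + (-∞) is interpreted as 0). Define ℓ = pq/(p+q) if p + q ≠ 0, ℓ = -∞ if p + q = 0 and (p,q) ≠ (0,0), and ℓ = 0 if (p,q) = (0,0). Then for all a, b, c, d ∈ [0,∞) and λ ∈ [0,1], M_p(a,b;λ) · M_q(c,d;λ) ≥ M_ℓ(ac, bd; λ). -/
open Set MeasureTheory

/-- The `p`-th mean `M_p(a,b;λ)` for an extended-real parameter `p`. -/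
noncomputable def pMean (p : EReal) (a b lam : ℝ) : ℝ :=
  if a * b = 0 then 0
  else if p = ⊤ then max a b
  else if p = ⊥ then min a b
  else if p = 0 then a ^ (1 - lam) * b ^ lam
  else ((1 - lam) * a ^ p.toReal + lam * b ^ p.toReal) ^ p.toReal⁻¹

/-- The `α`-th power mean of positive reals (geometric mean when `α = 0`). -/
noncomputable def tMean (α t₀ t₁ lam : ℝ) : ℝ :=
  if α = 0 then t₀ ^ (1 - lam) * t₁ ^ lam
  else ((1 - lam) * t₀ ^ α + lam * t₁ ^ α) ^ α⁻¹

/-- The sum `p + q`, with the convention `⊤ + ⊥ = ⊥ + ⊤ = 0`. -/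
noncomputable def sumPQ (p q : EReal) : EReal :=
  if (p = ⊤ ∧ q = ⊥) ∨ (p = ⊥ ∧ q = ⊤) then 0 else p + q

/-- The exponent `ℓ = pq/(p+q)` with the conventions of the
Borell–Brascamp–Lieb theory. -/
noncomputable def ellOf (p q : EReal) : EReal :=
  if p = 0 ∧ q = 0 then 0
  else if (p = ⊤ ∧ q = ⊥) ∨ (p = ⊥ ∧ q = ⊤) then ⊥
  else if p = ⊤ then q
  else if q = ⊤ then p
  else if p = ⊥ ∨ q = ⊥ then ⊥
  else if p + q = 0 then ⊥
  else ((p.toReal * q.toReal / (p.toReal + q.toReal) : ℝ) : EReal)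


lemma wpos {lam x y : ℝ} (hx : 0 < x) (hy : 0 < y) (h0 : 0 ≤ lam) (h1 : lam ≤ 1) :
    0 < (1 - lam) * x + lam * y := by
  rcases h1.lt_or_eq with h | h
  · have h2 : 0 < (1 - lam) * x := mul_pos (by linarith) hx
    nlinarith [mul_nonneg h0 hy.le]
  · subst h; simpa using hy

lemma tMean_pos {α x y lam : ℝ} (hx : 0 < x) (hy : 0 < y) (h0 : 0 ≤ lam) (h1 : lam ≤ 1) :
    0 < tMean α x y lam := by
  unfold tMean; split_ifs
  · exact mul_pos (Real.rpow_pos_of_pos hx _) (Real.rpow_pos_of_pos hy _)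
  · exact Real.rpow_pos_of_pos
      (wpos (Real.rpow_pos_of_pos hx α) (Real.rpow_pos_of_pos hy α) h0 h1) _

lemma tMean_lam_zero {α x y : ℝ} (hx : 0 < x) : tMean α x y 0 = x := by
  unfold tMean; split_ifs with h
  · norm_num
  · norm_num
    rw [← Real.rpow_mul hx.le, mul_inv_cancel₀ h, Real.rpow_one]

lemma tMean_lam_one {α x y : ℝ} (hy : 0 < y) : tMean α x y 1 = y := by
  unfold tMean; split_ifs with h
  · norm_num
  · norm_num
    rw [← Real.rpow_mul hy.le, mul_inv_cancel₀ h, Real.rpow_one]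

lemma tMean_mono {α x y x' y' lam : ℝ} (hx : 0 < x) (hy : 0 < y)
    (hxx : x ≤ x') (hyy : y ≤ y') (h0 : 0 ≤ lam) (h1 : lam ≤ 1) :
    tMean α x y lam ≤ tMean α x' y' lam := by
  have hx' : 0 < x' := hx.trans_le hxx
  have hy' : 0 < y' := hy.trans_le hyy
  unfold tMean; split_ifs with h
  · exact mul_le_mul (Real.rpow_le_rpow hx.le hxx (by linarith))
      (Real.rpow_le_rpow hy.le hyy h0) (Real.rpow_nonneg hy.le _)
      (Real.rpow_nonneg hx'.le _)
  · rcases lt_or_gt_of_ne h with hneg | hpos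
    · apply Real.rpow_le_rpow_of_nonpos
        (wpos (Real.rpow_pos_of_pos hx' α) (Real.rpow_pos_of_pos hy' α) h0 h1)
        ?_ (inv_nonpos.mpr hneg.le)
      exact add_le_add
        (mul_le_mul_of_nonneg_left (Real.rpow_le_rpow_of_nonpos hx hxx hneg.le) (by linarith))
        (mul_le_mul_of_nonneg_left (Real.rpow_le_rpow_of_nonpos hy hyy hneg.le) h0)
    · apply Real.rpow_le_rpow
        (wpos (Real.rpow_pos_of_pos hx α) (Real.rpow_pos_of_pos hy α) h0 h1).le
        ?_ (inv_nonneg.mpr hpos.le)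
      exact add_le_add
        (mul_le_mul_of_nonneg_left (Real.rpow_le_rpow hx.le hxx hpos.le) (by linarith))
        (mul_le_mul_of_nonneg_left (Real.rpow_le_rpow hy.le hyy hpos.le) h0)

lemma tMean_smul {α x y lam M : ℝ} (hM : 0 < M) (hx : 0 < x) (hy : 0 < y)
    (h0 : 0 ≤ lam) (h1 : lam ≤ 1) :
    tMean α (M * x) (M * y) lam = M * tMean α x y lam := by
  unfold tMean; split_ifs with h
  · rw [Real.mul_rpow hM.le hx.le, Real.mul_rpow hM.le hy.le,
      show M ^ (1-lam) * x ^ (1-lam) * (M ^ lam * y ^ lam)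
        = M ^ (1-lam) * M ^ lam * (x ^ (1-lam) * y ^ lam) by ring,
      ← Real.rpow_add hM]
    norm_num
  · have e : (1-lam) * (M*x) ^ α + lam * (M*y) ^ α
        = M ^ α * ((1-lam) * x ^ α + lam * y ^ α) := by
      rw [Real.mul_rpow hM.le hx.le, Real.mul_rpow hM.le hy.le]; ring
    rw [e, Real.mul_rpow (Real.rpow_nonneg hM.le _)
        (wpos (Real.rpow_pos_of_pos hx α) (Real.rpow_pos_of_pos hy α) h0 h1).le,
      ← Real.rpow_mul hM.le, mul_inv_cancel₀ h, Real.rpow_one]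

lemma geomMean_le_tMean {q x y lam : ℝ} (hq : 0 < q) (hx : 0 < x) (hy : 0 < y)
    (h0 : 0 ≤ lam) (h1 : lam ≤ 1) :
    x ^ (1 - lam) * y ^ lam ≤ tMean q x y lam := by
  have hq0 : q ≠ 0 := hq.ne'
  unfold tMean; rw [if_neg hq0]
  have key := Real.geom_mean_le_arith_mean2_weighted (by linarith : (0:ℝ) ≤ 1 - lam) h0
    (Real.rpow_nonneg hx.le q) (Real.rpow_nonneg hy.le q) (by ring)
  have h2 := Real.rpow_le_rpow (by positivity) key (inv_nonneg.mpr hq.le)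
  have e1 : ((x ^ q) ^ (1 - lam) * (y ^ q) ^ lam) ^ q⁻¹ = x ^ (1 - lam) * y ^ lam := by
    rw [Real.mul_rpow (Real.rpow_nonneg (Real.rpow_nonneg hx.le q) _)
        (Real.rpow_nonneg (Real.rpow_nonneg hy.le q) _),
      ← Real.rpow_mul hx.le, ← Real.rpow_mul hy.le,
      ← Real.rpow_mul hx.le, ← Real.rpow_mul hy.le,
      show q * (1-lam) * q⁻¹ = 1 - lam by field_simp,
      show q * lam * q⁻¹ = lam by field_simp]
  rw [← e1]; exact h2

lemma hold2 (α β u₁ u₂ v₁ v₂ : ℝ) (hα : 0 < α) (hβ : 0 < β) (hαβ : α + β = 1)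
    (hu₁ : 0 < u₁) (hu₂ : 0 < u₂) (hv₁ : 0 < v₁) (hv₂ : 0 < v₂) :
    u₁ ^ α * v₁ ^ β + u₂ ^ α * v₂ ^ β ≤ (u₁ + u₂) ^ α * (v₁ + v₂) ^ β := by
  have hU : 0 < u₁ + u₂ := by positivity
  have hV : 0 < v₁ + v₂ := by positivity
  have key : ∀ u v : ℝ, 0 < u → 0 < v →
      u ^ α * v ^ β ≤ (u₁+u₂) ^ α * (v₁+v₂) ^ β * (α * (u/(u₁+u₂)) + β * (v/(v₁+v₂))) := by
    intro u v hu hv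
    have g := Real.geom_mean_le_arith_mean2_weighted hα.le hβ.le
      (by positivity : (0:ℝ) ≤ u/(u₁+u₂)) (by positivity : (0:ℝ) ≤ v/(v₁+v₂)) hαβ
    have e : u ^ α * v ^ β
        = (u₁+u₂) ^ α * (v₁+v₂) ^ β * ((u/(u₁+u₂)) ^ α * (v/(v₁+v₂)) ^ β) := by
      rw [Real.div_rpow hu.le hU.le, Real.div_rpow hv.le hV.le]
      have h1 : (u₁+u₂) ^ α ≠ 0 := (Real.rpow_pos_of_pos hU _).ne'
      have h2 : (v₁+v₂) ^ β ≠ 0 := (Real.rpow_pos_of_pos hV _).ne'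
      field_simp
    rw [e]
    exact mul_le_mul_of_nonneg_left g (by positivity)
  calc u₁ ^ α * v₁ ^ β + u₂ ^ α * v₂ ^ β
      ≤ (u₁+u₂) ^ α * (v₁+v₂) ^ β * (α * (u₁/(u₁+u₂)) + β * (v₁/(v₁+v₂)))
        + (u₁+u₂) ^ α * (v₁+v₂) ^ β * (α * (u₂/(u₁+u₂)) + β * (v₂/(v₁+v₂))) :=
        add_le_add (key _ _ hu₁ hv₁) (key _ _ hu₂ hv₂)
    _ = (u₁+u₂) ^ α * (v₁+v₂) ^ β * (α * ((u₁+u₂)/(u₁+u₂)) + β * ((v₁+v₂)/(v₁+v₂))) := by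
        ring
    _ = (u₁+u₂) ^ α * (v₁+v₂) ^ β * (α + β) := by
        rw [div_self hU.ne', div_self hV.ne']; ring
    _ = (u₁+u₂) ^ α * (v₁+v₂) ^ β := by rw [hαβ, mul_one]

lemma hold2rev (α β u₁ u₂ v₁ v₂ : ℝ) (hα : α < 0) (hαβ : α + β = 1)
    (hu₁ : 0 < u₁) (hu₂ : 0 < u₂) (hv₁ : 0 < v₁) (hv₂ : 0 < v₂) :
    (u₁ + u₂) ^ α * (v₁ + v₂) ^ β ≤ u₁ ^ α * v₁ ^ β + u₂ ^ α * v₂ ^ β := by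
  have hβ1 : 1 < β := by linarith
  have hβ0 : 0 < β := by linarith
  have hx₁ : 0 < u₁ ^ α * v₁ ^ β := by positivity
  have hx₂ : 0 < u₂ ^ α * v₂ ^ β := by positivity
  have hsum : 1/β + -α/β = 1 := by
    rw [← add_div, show (1:ℝ) + -α = β by linarith, div_self hβ0.ne']
  have h := hold2 (1/β) (-α/β) (u₁ ^ α * v₁ ^ β) (u₂ ^ α * v₂ ^ β) u₁ u₂
    (by positivity) (div_pos (by linarith) hβ0) hsum hx₁ hx₂ hu₁ hu₂
  have e : ∀ u v : ℝ, 0 < u → 0 < v → (u ^ α * v ^ β) ^ (1/β) * u ^ (-α/β) = v := by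
    intro u v hu hv
    rw [Real.mul_rpow (Real.rpow_nonneg hu.le _) (Real.rpow_nonneg hv.le _),
      ← Real.rpow_mul hu.le, ← Real.rpow_mul hv.le,
      show β * (1/β) = 1 by field_simp, Real.rpow_one,
      show α * (1/β) = α/β by ring, mul_right_comm, ← Real.rpow_add hu,
      show α/β + -α/β = 0 by ring, Real.rpow_zero, one_mul]
  rw [e u₁ v₁ hu₁ hv₁, e u₂ v₂ hu₂ hv₂] at h
  have h2 := Real.rpow_le_rpow (by positivity) h hβ0.le
  rw [Real.mul_rpow (Real.rpow_nonneg (by positivity) _) (Real.rpow_nonneg (by positivity) _),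
    ← Real.rpow_mul (by positivity), ← Real.rpow_mul (by positivity),
    show 1/β * β = 1 by field_simp, show -α/β * β = -α by field_simp, Real.rpow_one] at h2
  calc (u₁+u₂) ^ α * (v₁+v₂) ^ β
      ≤ (u₁+u₂) ^ α * ((u₁ ^ α * v₁ ^ β + u₂ ^ α * v₂ ^ β) * (u₁+u₂) ^ (-α)) :=
        mul_le_mul_of_nonneg_left h2 (Real.rpow_nonneg (by positivity) α)
    _ = (u₁ ^ α * v₁ ^ β + u₂ ^ α * v₂ ^ β) * ((u₁+u₂) ^ α * (u₁+u₂) ^ (-α)) := by ring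
    _ = u₁ ^ α * v₁ ^ β + u₂ ^ α * v₂ ^ β := by
        rw [← Real.rpow_add (by positivity), show α + -α = 0 by ring, Real.rpow_zero, mul_one]

lemma coreAux (p q a b c d lam : ℝ) (hp : 0 < p) (hq : q ≠ 0) (hpq : 0 < p + q)
    (ha : 0 < a) (hb : 0 < b) (hc : 0 < c) (hd : 0 < d) (h0 : 0 < lam) (h1 : lam < 1) :
    tMean (p * q / (p + q)) (a * c) (b * d) lam ≤ tMean p a b lam * tMean q c d lam := by
  have hp0 : p ≠ 0 := hp.ne'
  have hpq0 : p + q ≠ 0 := hpq.ne'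
  set ℓ := p * q / (p + q) with hldef
  have hl0 : ℓ ≠ 0 := div_ne_zero (mul_ne_zero hp0 hq) hpq0
  have hαβ : ℓ / p + ℓ / q = 1 := by rw [hldef]; field_simp; ring
  have hpα : p * (ℓ / p) = ℓ := by field_simp
  have hqβ : q * (ℓ / q) = ℓ := by field_simp
  have hw1 : 0 < 1 - lam := by linarith
  have hSpos : 0 < (1 - lam) * a ^ p + lam * b ^ p :=
    wpos (by positivity) (by positivity) h0.le h1.le
  have hTpos : 0 < (1 - lam) * c ^ q + lam * d ^ q :=
    wpos (by positivity) (by positivity) h0.le h1.le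
  have hterm : ∀ w x y : ℝ, 0 < w → 0 < x → 0 < y →
      (w * x ^ p) ^ (ℓ / p) * (w * y ^ q) ^ (ℓ / q) = w * (x * y) ^ ℓ := by
    intro w x y hw hx hy
    calc (w * x ^ p) ^ (ℓ / p) * (w * y ^ q) ^ (ℓ / q)
        = w ^ (ℓ / p) * w ^ (ℓ / q) * (x ^ (p * (ℓ / p)) * y ^ (q * (ℓ / q))) := by
          rw [Real.mul_rpow hw.le (by positivity), Real.mul_rpow hw.le (by positivity),
            Real.rpow_mul hx.le, Real.rpow_mul hy.le]; ring
      _ = w * (x * y) ^ ℓ := by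
          rw [← Real.rpow_add hw, hαβ, Real.rpow_one, hpα, hqβ, Real.mul_rpow hx.le hy.le]
  have hLe : tMean ℓ (a * c) (b * d) lam
      = ((1 - lam) * (a * c) ^ ℓ + lam * (b * d) ^ ℓ) ^ ℓ⁻¹ := by
    unfold tMean; rw [if_neg hl0]
  have hPe : tMean p a b lam = ((1 - lam) * a ^ p + lam * b ^ p) ^ p⁻¹ := by
    unfold tMean; rw [if_neg hp0]
  have hQe : tMean q c d lam = ((1 - lam) * c ^ q + lam * d ^ q) ^ q⁻¹ := by
    unfold tMean; rw [if_neg hq]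
  have hid : (((1 - lam) * a ^ p + lam * b ^ p) ^ (ℓ / p)
        * ((1 - lam) * c ^ q + lam * d ^ q) ^ (ℓ / q)) ^ ℓ⁻¹
      = ((1 - lam) * a ^ p + lam * b ^ p) ^ p⁻¹
        * ((1 - lam) * c ^ q + lam * d ^ q) ^ q⁻¹ := by
    rw [Real.mul_rpow (Real.rpow_nonneg hSpos.le _) (Real.rpow_nonneg hTpos.le _),
      ← Real.rpow_mul hSpos.le, ← Real.rpow_mul hTpos.le,
      show ℓ / p * ℓ⁻¹ = p⁻¹ by field_simp,
      show ℓ / q * ℓ⁻¹ = q⁻¹ by field_simp]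
  rw [hLe, hPe, hQe, ← hid]
  rcases lt_or_gt_of_ne hq with hqneg | hqpos
  · have hlneg : ℓ < 0 := div_neg_of_neg_of_pos (mul_neg_of_pos_of_neg hp hqneg) hpq
    have key := hold2rev (ℓ / p) (ℓ / q) ((1 - lam) * a ^ p) (lam * b ^ p)
      ((1 - lam) * c ^ q) (lam * d ^ q)
      (div_neg_of_neg_of_pos hlneg hp) hαβ
      (by positivity) (by positivity) (by positivity) (by positivity)
    rw [hterm _ _ _ hw1 ha hc, hterm _ _ _ h0 hb hd] at key
    exact Real.rpow_le_rpow_of_nonpos (by positivity) key (inv_nonpos.mpr hlneg.le)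
  · have hlpos : 0 < ℓ := by rw [hldef]; positivity
    have key := hold2 (ℓ / p) (ℓ / q) ((1 - lam) * a ^ p) (lam * b ^ p)
      ((1 - lam) * c ^ q) (lam * d ^ q)
      (div_pos hlpos hp) (div_pos hlpos hqpos) hαβ
      (by positivity) (by positivity) (by positivity) (by positivity)
    rw [hterm _ _ _ hw1 ha hc, hterm _ _ _ h0 hb hd] at key
    exact Real.rpow_le_rpow (by positivity) key (inv_nonneg.mpr hlpos.le)

lemma core (p q a b c d lam : ℝ) (hp : p ≠ 0) (hq : q ≠ 0) (hpq : 0 < p + q)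
    (ha : 0 < a) (hb : 0 < b) (hc : 0 < c) (hd : 0 < d) (h0 : 0 ≤ lam) (h1 : lam ≤ 1) :
    tMean (p * q / (p + q)) (a * c) (b * d) lam ≤ tMean p a b lam * tMean q c d lam := by
  rcases h0.lt_or_eq with h0' | h0'
  on_goal 2 =>
    rw [← h0', tMean_lam_zero (by positivity), tMean_lam_zero ha, tMean_lam_zero hc]
  rcases h1.lt_or_eq with h1' | h1'
  on_goal 2 =>
    rw [h1', tMean_lam_one (by positivity), tMean_lam_one hb, tMean_lam_one hd]
  rcases lt_or_gt_of_ne hp with hpneg | hppos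
  · have hqpos : 0 < q := by linarith
    have h := coreAux q p c d a b lam hqpos hp (by linarith) hc hd ha hb h0' h1'
    rw [mul_comm p q, add_comm p q, mul_comm a c, mul_comm b d,
      mul_comm (tMean p a b lam)]
    exact h
  · exact coreAux p q a b c d lam hppos hq hpq ha hb hc hd h0' h1'

lemma minCase (x a b c d lam : ℝ) (hx : 0 < x)
    (ha : 0 < a) (hb : 0 < b) (hc : 0 < c) (hd : 0 < d) (h0 : 0 ≤ lam) (h1 : lam ≤ 1) :
    min (a * c) (b * d) ≤ tMean x a b lam * tMean (-x) c d lam := by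
  set m := min (a * c) (b * d) with hm
  have hmpos : 0 < m := lt_min (by positivity) (by positivity)
  have h1' : m / c ≤ a := by rw [div_le_iff₀ hc]; exact min_le_left _ _
  have h2' : m / d ≤ b := by rw [div_le_iff₀ hd]; exact min_le_right _ _
  have hmono : tMean x (m / c) (m / d) lam ≤ tMean x a b lam :=
    tMean_mono (by positivity) (by positivity) h1' h2' h0 h1
  have hsmul : tMean x (m / c) (m / d) lam = m * tMean x c⁻¹ d⁻¹ lam := by
    rw [show m / c = m * c⁻¹ by ring, show m / d = m * d⁻¹ by ring]
    exact tMean_smul hmpos (by positivity) (by positivity) h0 h1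
  have hrel : tMean (-x) c d lam * tMean x c⁻¹ d⁻¹ lam = 1 := by
    unfold tMean
    rw [if_neg (neg_ne_zero.mpr hx.ne'), if_neg hx.ne',
      Real.inv_rpow hc.le, Real.inv_rpow hd.le, ← Real.rpow_neg hc.le, ← Real.rpow_neg hd.le,
      ← Real.rpow_add (wpos (Real.rpow_pos_of_pos hc _) (Real.rpow_pos_of_pos hd _) h0 h1),
      show (-x)⁻¹ + x⁻¹ = 0 by rw [inv_neg]; ring, Real.rpow_zero]
  calc m = m * tMean x c⁻¹ d⁻¹ lam * tMean (-x) c d lam := by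
        rw [mul_assoc, mul_comm (tMean x c⁻¹ d⁻¹ lam), hrel, mul_one]
    _ = tMean x (m / c) (m / d) lam * tMean (-x) c d lam := by rw [hsmul]
    _ ≤ tMean x a b lam * tMean (-x) c d lam :=
        mul_le_mul_of_nonneg_right hmono (tMean_pos hc hd h0 h1).le

lemma tMean_zero_eq (x y lam : ℝ) : tMean 0 x y lam = x ^ (1 - lam) * y ^ lam := by
  simp [tMean]

lemma tMean_zero_mul {a b c d : ℝ} (lam : ℝ) (ha : 0 < a) (hb : 0 < b) (hc : 0 < c)
    (hd : 0 < d) : tMean 0 (a*c) (b*d) lam = tMean 0 a b lam * tMean 0 c d lam := by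
  rw [tMean_zero_eq, tMean_zero_eq, tMean_zero_eq,
    Real.mul_rpow ha.le hc.le, Real.mul_rpow hb.le hd.le]; ring

lemma pMean_top (a b lam : ℝ) (hab : a * b ≠ 0) : pMean ⊤ a b lam = max a b := by
  unfold pMean; rw [if_neg hab, if_pos rfl]

lemma pMean_bot (a b lam : ℝ) (hab : a * b ≠ 0) : pMean ⊥ a b lam = min a b := by
  unfold pMean; rw [if_neg hab, if_neg (by simp), if_pos rfl]

lemma pMean_coe (t a b lam : ℝ) (hab : a * b ≠ 0) :
    pMean (t : EReal) a b lam = tMean t a b lam := by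
  unfold pMean tMean
  rw [if_neg hab, if_neg (EReal.coe_ne_top t), if_neg (EReal.coe_ne_bot t)]
  simp only [EReal.coe_eq_zero, EReal.toReal_coe]

lemma pMean_nonneg (r : EReal) {a b lam : ℝ} (ha : 0 ≤ a) (hb : 0 ≤ b)
    (h0 : 0 ≤ lam) (h1 : lam ≤ 1) : 0 ≤ pMean r a b lam := by
  unfold pMean; split_ifs
  · exact le_refl 0
  · exact le_trans ha (le_max_left _ _)
  · exact le_min ha hb
  · exact mul_nonneg (Real.rpow_nonneg ha _) (Real.rpow_nonneg hb _)
  · exact Real.rpow_nonneg (add_nonneg (mul_nonneg (by linarith) (Real.rpow_nonneg ha _))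
      (mul_nonneg h0 (Real.rpow_nonneg hb _))) _

theorem stmt1 (p q : EReal) (hpq : 0 ≤ sumPQ p q)
    (a b c d lam : ℝ) (ha : 0 ≤ a) (hb : 0 ≤ b) (hc : 0 ≤ c) (hd : 0 ≤ d)
    (hlam : lam ∈ Set.Icc (0:ℝ) 1) :
    pMean (ellOf p q) (a * c) (b * d) lam ≤ pMean p a b lam * pMean q c d lam := by
  obtain ⟨h0, h1⟩ := hlam
  by_cases h00 : (a * c) * (b * d) = 0
  · rw [show pMean (ellOf p q) (a*c) (b*d) lam = 0 from by unfold pMean; rw [if_pos h00]]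
    exact mul_nonneg (pMean_nonneg _ ha hb h0 h1) (pMean_nonneg _ hc hd h0 h1)
  · obtain ⟨hac, hbd⟩ := mul_ne_zero_iff.mp h00
    obtain ⟨ha0, hc0⟩ := mul_ne_zero_iff.mp hac
    obtain ⟨hb0, hd0⟩ := mul_ne_zero_iff.mp hbd
    have ha' : 0 < a := ha.lt_of_ne (Ne.symm ha0)
    have hb' : 0 < b := hb.lt_of_ne (Ne.symm hb0)
    have hc' : 0 < c := hc.lt_of_ne (Ne.symm hc0)
    have hd' : 0 < d := hd.lt_of_ne (Ne.symm hd0)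
    have hab : a * b ≠ 0 := (mul_pos ha' hb').ne'
    have hcd : c * d ≠ 0 := (mul_pos hc' hd').ne'
    induction p using EReal.rec with
    | bot =>
      induction q using EReal.rec with
      | bot => exfalso; simp [sumPQ] at hpq
      | coe y => exfalso; simp [sumPQ] at hpq
      | top =>
        rw [show ellOf ⊥ ⊤ = ⊥ by simp [ellOf], pMean_bot _ _ _ h00, pMean_bot _ _ _ hab,
          pMean_top _ _ _ hcd]
        rcases le_total a b with h | h
        · calc min (a*c) (b*d) ≤ a*c := min_le_left _ _
            _ ≤ min a b * max c d := by
                rw [min_eq_left h]; exact mul_le_mul_of_nonneg_left (le_max_left _ _) ha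
        · calc min (a*c) (b*d) ≤ b*d := min_le_right _ _
            _ ≤ min a b * max c d := by
                rw [min_eq_right h]; exact mul_le_mul_of_nonneg_left (le_max_right _ _) hb
    | coe x =>
      induction q using EReal.rec with
      | bot => exfalso; simp [sumPQ] at hpq
      | top =>
        rw [show ellOf ↑x ⊤ = ↑x by simp [ellOf], pMean_coe _ _ _ _ h00,
          pMean_coe _ _ _ _ hab, pMean_top _ _ _ hcd]
        have hM : 0 < max c d := lt_of_lt_of_le hc' (le_max_left c d)
        calc tMean x (a*c) (b*d) lam ≤ tMean x (max c d * a) (max c d * b) lam :=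
              tMean_mono (by positivity) (by positivity)
                (by rw [mul_comm a c]; exact mul_le_mul_of_nonneg_right (le_max_left c d) ha)
                (by rw [mul_comm b d]; exact mul_le_mul_of_nonneg_right (le_max_right c d) hb)
                h0 h1
          _ = max c d * tMean x a b lam := tMean_smul hM ha' hb' h0 h1
          _ = tMean x a b lam * max c d := mul_comm _ _
      | coe y =>
        have hsum : sumPQ ↑x ↑y = ((x + y : ℝ) : EReal) := by simp [sumPQ]
        rw [hsum] at hpq
        have hxy : 0 ≤ x + y := by exact_mod_cast hpq
        rcases hxy.lt_or_eq with hxy' | hxy'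
        · have hsumne : (↑x + ↑y : EReal) ≠ 0 := by
            rw [← EReal.coe_add]
            exact_mod_cast hxy'.ne'
          by_cases hx0 : x = 0
          · subst hx0
            have hy' : 0 < y := by linarith
            have hell : ellOf ((0:ℝ) : EReal) ↑y = (((0:ℝ)) : EReal) := by
              simp [ellOf, hy'.ne', hsumne]
            rw [hell, pMean_coe _ _ _ _ h00, pMean_coe _ _ _ _ hab, pMean_coe _ _ _ _ hcd,
              tMean_zero_mul lam ha' hb' hc' hd']
            apply mul_le_mul_of_nonneg_left ?_ (tMean_pos ha' hb' h0 h1).le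
            rw [tMean_zero_eq]
            exact geomMean_le_tMean hy' hc' hd' h0 h1
          · by_cases hy0 : y = 0
            · subst hy0
              have hx' : 0 < x := by linarith
              have hell : ellOf (x : EReal) ((0:ℝ) : EReal) = (((0:ℝ)) : EReal) := by
                simp [ellOf, hx0, hsumne]
              rw [hell, pMean_coe _ _ _ _ h00, pMean_coe _ _ _ _ hab, pMean_coe _ _ _ _ hcd,
                tMean_zero_mul lam ha' hb' hc' hd']
              apply mul_le_mul_of_nonneg_right ?_ (tMean_pos hc' hd' h0 h1).le
              rw [tMean_zero_eq]
              exact geomMean_le_tMean hx' ha' hb' h0 h1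
            · have hell : ellOf (x : EReal) (y : EReal) = ((x * y / (x + y) : ℝ) : EReal) := by
                simp [ellOf, hx0, hsumne]
              rw [hell, pMean_coe _ _ _ _ h00, pMean_coe _ _ _ _ hab, pMean_coe _ _ _ _ hcd]
              exact core x y a b c d lam hx0 hy0 hxy' ha' hb' hc' hd' h0 h1
        · by_cases hx0 : x = 0
          · have hy0 : y = 0 := by linarith
            subst hx0; subst hy0
            have hell : ellOf ((0:ℝ) : EReal) ((0:ℝ) : EReal) = (((0:ℝ)) : EReal) := by
              simp [ellOf]
            rw [hell, pMean_coe _ _ _ _ h00, pMean_coe _ _ _ _ hab, pMean_coe _ _ _ _ hcd]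
            exact le_of_eq (tMean_zero_mul lam ha' hb' hc' hd')
          · have hy0 : y ≠ 0 := fun h => hx0 (by linarith)
            have hsz : (↑x + ↑y : EReal) = 0 := by
              rw [← EReal.coe_add]
              exact_mod_cast hxy'.symm
            have hell : ellOf (x : EReal) (y : EReal) = ⊥ := by
              simp [ellOf, hx0, hsz]
            rw [hell, pMean_bot _ _ _ h00, pMean_coe _ _ _ _ hab, pMean_coe _ _ _ _ hcd]
            rcases lt_or_gt_of_ne hx0 with hxneg | hxpos
            · have h := minCase y c d a b lam (by linarith) hc' hd' ha' hb' h0 h1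
              rw [show -y = x by linarith] at h
              rw [mul_comm a c, mul_comm b d, mul_comm (tMean x a b lam)]
              exact h
            · have h := minCase x a b c d lam hxpos ha' hb' hc' hd' h0 h1
              rw [show -x = y by linarith] at h
              exact h
    | top =>
      induction q using EReal.rec with
      | bot =>
        rw [show ellOf ⊤ ⊥ = ⊥ by simp [ellOf], pMean_bot _ _ _ h00, pMean_top _ _ _ hab,
          pMean_bot _ _ _ hcd]
        rcases le_total c d with h | h
        · calc min (a*c) (b*d) ≤ a*c := min_le_left _ _
            _ ≤ max a b * min c d := by
                rw [min_eq_left h]; exact mul_le_mul_of_nonneg_right (le_max_left _ _) hc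
        · calc min (a*c) (b*d) ≤ b*d := min_le_right _ _
            _ ≤ max a b * min c d := by
                rw [min_eq_right h]; exact mul_le_mul_of_nonneg_right (le_max_right _ _) hd
      | top =>
        rw [show ellOf ⊤ ⊤ = ⊤ by simp [ellOf], pMean_top _ _ _ h00, pMean_top _ _ _ hab,
          pMean_top _ _ _ hcd]
        exact max_le
          (mul_le_mul (le_max_left a b) (le_max_left c d) hc (le_trans ha (le_max_left a b)))
          (mul_le_mul (le_max_right a b) (le_max_right c d) hd (le_trans ha (le_max_left a b)))
      | coe y =>
        rw [show ellOf ⊤ ↑y = ↑y by simp [ellOf], pMean_coe _ _ _ _ h00,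
          pMean_top _ _ _ hab, pMean_coe _ _ _ _ hcd]
        have hM : 0 < max a b := lt_of_lt_of_le ha' (le_max_left a b)
        calc tMean y (a*c) (b*d) lam ≤ tMean y (max a b * c) (max a b * d) lam :=
              tMean_mono (by positivity) (by positivity)
                (mul_le_mul_of_nonneg_right (le_max_left a b) hc)
                (mul_le_mul_of_nonneg_right (le_max_right a b) hd) h0 h1
          _ = max a b * tMean y c d lam := tMean_smul hM hc' hd' h0 h1
end

section
/- Let E ⊂ ℝⁿ × (0,∞), α ∈ ℝ \ {0}, and define ω_α(x,t) = (x/t^α, 1/t^α). Then E is α-parabolically convex if and only if the image ω_α(E) ⊂ ℝⁿ × (0,∞) is convex. -/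
open Set MeasureTheory

theorem stmt8 {n : ℕ} (E : Set (EuclideanSpace ℝ (Fin n) × ℝ))
    (hE : ∀ z ∈ E, 0 < z.2) (α : ℝ) (hα : α ≠ 0) :
    (∀ z₀ ∈ E, ∀ z₁ ∈ E, ∀ lam ∈ Set.Icc (0:ℝ) 1,
        ((1 - lam) • z₀.1 + lam • z₁.1,
          ((1 - lam) * z₀.2 ^ α + lam * z₁.2 ^ α) ^ α⁻¹) ∈ E) ↔
      Convex ℝ ((fun z : EuclideanSpace ℝ (Fin n) × ℝ =>
        ((z.2 ^ α)⁻¹ • z.1, (z.2 ^ α)⁻¹)) '' E) := by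
  have pow_inv : ∀ S : ℝ, 0 < S → (S ^ α⁻¹) ^ α = S := by
    intro S hS
    rw [← Real.rpow_mul hS.le, inv_mul_cancel₀ hα, Real.rpow_one]
  have inv_pow : ∀ t : ℝ, 0 < t → (t ^ α) ^ α⁻¹ = t := by
    intro t ht
    rw [← Real.rpow_mul ht.le, mul_inv_cancel₀ hα, Real.rpow_one]
  constructor
  · intro h p hp q hq a b ha hb hab
    obtain ⟨z₀, hz₀, rfl⟩ := hp
    obtain ⟨z₁, hz₁, rfl⟩ := hq
    have hs₀ : (0:ℝ) < z₀.2 ^ α := Real.rpow_pos_of_pos (hE _ hz₀) α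
    have hs₁ : (0:ℝ) < z₁.2 ^ α := Real.rpow_pos_of_pos (hE _ hz₁) α
    set s₀ := z₀.2 ^ α with hs₀def
    set s₁ := z₁.2 ^ α with hs₁def
    have hT : 0 < a * s₁ + b * s₀ := by
      rcases ha.lt_or_eq with h0 | h0
      · nlinarith [mul_nonneg hb hs₀.le]
      · have hb1 : b = 1 := by linarith
        rw [← h0, hb1]; simpa using hs₀
    set T := a * s₁ + b * s₀ with hTdef
    set lam := b * s₀ / T with hlamdef
    have h1lam : 1 - lam = a * s₁ / T := by
      rw [hlamdef, hTdef]; field_simp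
      rw [eq_div_iff (hT.ne' : a * s₁ + b * s₀ ≠ 0), sub_mul, div_mul_cancel₀ _ (hT.ne' : a * s₁ + b * s₀ ≠ 0)]; ring
    have hlam0 : 0 ≤ lam := by positivity
    have hlam1 : lam ≤ 1 := by
      rw [hlamdef, div_le_one hT]; nlinarith [mul_nonneg ha hs₁.le]
    have hS' : (1 - lam) * s₀ + lam * s₁ = s₀ * s₁ / T := by
      rw [h1lam, hlamdef, div_mul_eq_mul_div, div_mul_eq_mul_div, ← add_div]
      congr 1
      linear_combination s₀ * s₁ * hab
    have hS'pos : 0 < (1 - lam) * s₀ + lam * s₁ := by rw [hS']; positivity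
    have hmem := h z₀ hz₀ z₁ hz₁ lam ⟨hlam0, hlam1⟩
    refine ⟨_, hmem, ?_⟩
    simp only
    have h2 : (((1 - lam) * s₀ + lam * s₁) ^ α⁻¹) ^ α = (1 - lam) * s₀ + lam * s₁ :=
      pow_inv _ hS'pos
    rw [h2, Prod.smul_mk, Prod.smul_mk, Prod.mk_add_mk, Prod.mk.injEq]
    constructor
    · rw [smul_add, smul_smul, smul_smul, smul_smul, smul_smul]
      congr 1
      · congr 1
        rw [hS', h1lam, ← hs₀def]
        field_simp
      · congr 1
        rw [hS', hlamdef, ← hs₁def]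
        field_simp
    · rw [hS', smul_eq_mul, smul_eq_mul, ← hs₀def, ← hs₁def, inv_div]
      field_simp
      rw [hTdef]; ring
  · intro h z₀ hz₀ z₁ hz₁ lam hlam
    obtain ⟨hl0, hl1⟩ := hlam
    have hs₀ : (0:ℝ) < z₀.2 ^ α := Real.rpow_pos_of_pos (hE _ hz₀) α
    have hs₁ : (0:ℝ) < z₁.2 ^ α := Real.rpow_pos_of_pos (hE _ hz₁) α
    set s₀ := z₀.2 ^ α
    set s₁ := z₁.2 ^ α
    have hS : 0 < (1 - lam) * s₀ + lam * s₁ := by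
      rcases hl1.lt_or_eq with h0 | h0
      · nlinarith [mul_nonneg hl0 hs₁.le]
      · rw [h0]; simpa using hs₁
    set S := (1 - lam) * s₀ + lam * s₁ with hSdef
    set a := (1 - lam) * s₀ / S with hadef
    set b := lam * s₁ / S with hbdef
    have ha : 0 ≤ a := div_nonneg (mul_nonneg (by linarith) hs₀.le) hS.le
    have hb : 0 ≤ b := div_nonneg (mul_nonneg hl0 hs₁.le) hS.le
    have hab : a + b = 1 := by
      rw [hadef, hbdef, hSdef]; field_simp
      exact div_self hS.ne'
    have hmem := h ⟨z₀, hz₀, rfl⟩ ⟨z₁, hz₁, rfl⟩ ha hb hab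
    obtain ⟨w, hw, hweq⟩ := hmem
    have hwpos := hE w hw
    have hws : (0:ℝ) < w.2 ^ α := Real.rpow_pos_of_pos hwpos α
    -- compute the combination explicitly
    simp only [Prod.smul_mk, Prod.mk_add_mk, Prod.mk.injEq] at hweq
    obtain ⟨hw1, hw2⟩ := hweq
    -- second coordinates
    have hcomb2 : a • s₀⁻¹ + b • s₁⁻¹ = S⁻¹ := by
      rw [hadef, hbdef, smul_eq_mul, smul_eq_mul, hSdef]
      field_simp
      ring
    have hw2' : (w.2 ^ α)⁻¹ = S⁻¹ := by rw [hw2, hcomb2]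
    have hwS : w.2 ^ α = S := by
      have := congrArg Inv.inv hw2'
      simpa using this
    have hwt : w.2 = S ^ α⁻¹ := by
      rw [← hwS, inv_pow _ hwpos]
    -- first coordinates
    have hcomb1 : a • s₀⁻¹ • z₀.1 + b • s₁⁻¹ • z₁.1
        = S⁻¹ • ((1 - lam) • z₀.1 + lam • z₁.1) := by
      rw [smul_add, smul_smul, smul_smul, smul_smul, smul_smul]
      congr 1
      · congr 1
        rw [hadef, hSdef]
        field_simp
      · congr 1
        rw [hbdef, hSdef]
        field_simp
    have hw1' : w.1 = (1 - lam) • z₀.1 + lam • z₁.1 := by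
      have h1 : (w.2 ^ α)⁻¹ • w.1 = S⁻¹ • ((1 - lam) • z₀.1 + lam • z₁.1) := by
        rw [hw1, hcomb1]
      rw [hwS] at h1
      exact smul_right_injective (EuclideanSpace ℝ (Fin n)) (inv_ne_zero hS.ne') h1
    have : w = ((1 - lam) • z₀.1 + lam • z₁.1,
        ((1 - lam) * s₀ + lam * s₁) ^ α⁻¹) := by
      exact Prod.ext hw1' hwt
    exact this ▸ hw
end

section
/- Let A be a convex set in ℝⁿ, f : A → [0,∞) a p-concave function with p ∈ ℝ \ {0}, α ∈ ℝ \ {0}, Â_α = {(x,t) ∈ ℝⁿ×(0,∞) | x/t^α ∈ A}, and f̂(x,t) = t^{α/p} f(x/t^α). Then f̂ is α-parabolically p-concave on Â_α: for all (x₀,t₀), (x₁,t₁) ∈ Â_α and λ ∈ [0,1], f̂((1-λ)x₀+λx₁, M_α(t₀,t₁;λ)) ≥ M_p(f̂(x₀,t₀), f̂(x₁,t₁); λ). -/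
open Set MeasureTheory

theorem stmt11 {n : ℕ} (A : Set (EuclideanSpace ℝ (Fin n))) (hA : Convex ℝ A)
    (p α : ℝ) (hp : p ≠ 0) (hα : α ≠ 0)
    (f : EuclideanSpace ℝ (Fin n) → ℝ) (hf0 : ∀ x ∈ A, 0 ≤ f x)
    (hconc : ∀ x₀ ∈ A, ∀ x₁ ∈ A, ∀ lam ∈ Set.Icc (0:ℝ) 1,
        pMean (p : EReal) (f x₀) (f x₁) lam ≤ f ((1 - lam) • x₀ + lam • x₁)) :
    ∀ x₀ x₁ : EuclideanSpace ℝ (Fin n), ∀ t₀ t₁ : ℝ, 0 < t₀ → 0 < t₁ →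
      (t₀ ^ α)⁻¹ • x₀ ∈ A → (t₁ ^ α)⁻¹ • x₁ ∈ A → ∀ lam ∈ Set.Icc (0:ℝ) 1,
      pMean (p : EReal)
          (t₀ ^ (α / p) * f ((t₀ ^ α)⁻¹ • x₀))
          (t₁ ^ (α / p) * f ((t₁ ^ α)⁻¹ • x₁)) lam ≤
        (tMean α t₀ t₁ lam) ^ (α / p) *
          f (((tMean α t₀ t₁ lam) ^ α)⁻¹ • ((1 - lam) • x₀ + lam • x₁)) := by
  intro x₀ x₁ t₀ t₁ ht₀ ht₁ hy₀ hy₁ lam hlam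
  obtain ⟨hl0, hl1⟩ := hlam
  set u := t₀ ^ α with hu
  set v := t₁ ^ α with hv
  have hu0 : 0 < u := Real.rpow_pos_of_pos ht₀ α
  have hv0 : 0 < v := Real.rpow_pos_of_pos ht₁ α
  set S := (1 - lam) * u + lam * v with hS
  have hS0 : 0 < S := by
    rcases le_total u v with h | h
    · nlinarith
    · nlinarith
  set μ := lam * v / S with hμ
  have hμ0 : 0 ≤ μ := by positivity
  have hμ1 : μ ≤ 1 := by
    rw [hμ, div_le_one hS0]
    nlinarith
  have h1μ : 1 - μ = (1 - lam) * u / S := by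
    field_simp [hμ, hS]
    rw [hμ, sub_mul, div_mul_cancel₀ _ hS0.ne', hS]; ring
  set y₀ := u⁻¹ • x₀ with hy0def
  set y₁ := v⁻¹ • x₁ with hy1def
  set a := f y₀ with haa
  set b := f y₁ with hbb
  have ha0 : 0 ≤ a := hf0 _ hy₀
  have hb0 : 0 ≤ b := hf0 _ hy₁
  have hT : tMean α t₀ t₁ lam = S ^ α⁻¹ := by rw [tMean, if_neg hα]
  have hTα : tMean α t₀ t₁ lam ^ α = S := by
    rw [hT, Real.rpow_inv_rpow hS0.le hα]
  -- rewrite the powers t₀ ^ (α / p) etc.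
  have hp0 : t₀ ^ (α / p) = u ^ p⁻¹ := by
    rw [hu, div_eq_mul_inv, Real.rpow_mul ht₀.le]
  have hp1 : t₁ ^ (α / p) = v ^ p⁻¹ := by
    rw [hv, div_eq_mul_inv, Real.rpow_mul ht₁.le]
  have hTpos : 0 < tMean α t₀ t₁ lam := by
    rw [hT]; exact Real.rpow_pos_of_pos hS0 _
  have hTp : tMean α t₀ t₁ lam ^ (α / p) = S ^ p⁻¹ := by
    rw [div_eq_mul_inv, Real.rpow_mul hTpos.le, hTα]
  -- the argument of f on the RHS
  have harg : ((tMean α t₀ t₁ lam ^ α)⁻¹ : ℝ) • ((1 - lam) • x₀ + lam • x₁)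
      = (1 - μ) • y₀ + μ • y₁ := by
    rw [hTα, hy0def, hy1def, smul_add, smul_smul, smul_smul, smul_smul, smul_smul]
    congr 1
    · congr 1
      rw [h1μ]
      field_simp
    · congr 1
      rw [hμ]
      field_simp
  -- key pMean identity
  have key : pMean (p : EReal) (u ^ p⁻¹ * a) (v ^ p⁻¹ * b) lam
      = S ^ p⁻¹ * pMean (p : EReal) a b μ := by
    by_cases hab : a * b = 0
    · have h2 : (u ^ p⁻¹ * a) * (v ^ p⁻¹ * b) = 0 := by
        rw [mul_mul_mul_comm, hab, mul_zero]
      rw [pMean, pMean, if_pos hab, if_pos h2, mul_zero]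
    · obtain ⟨ha, hb⟩ := mul_ne_zero_iff.mp hab
      have ha' : 0 < a := ha0.lt_of_ne (Ne.symm ha)
      have hb' : 0 < b := hb0.lt_of_ne (Ne.symm hb)
      have h2 : (u ^ p⁻¹ * a) * (v ^ p⁻¹ * b) ≠ 0 := by positivity
      rw [pMean, pMean, if_neg h2, if_neg hab,
        if_neg (by simp : (p : EReal) ≠ ⊤), if_neg (by simp : (p : EReal) ≠ ⊥),
        if_neg (by simpa using hp : (p : EReal) ≠ 0),
        if_neg (by simp : (p : EReal) ≠ ⊤), if_neg (by simp : (p : EReal) ≠ ⊥),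
        if_neg (by simpa using hp : (p : EReal) ≠ 0), EReal.toReal_coe]
      have e1 : (u ^ p⁻¹ * a) ^ p = u * a ^ p := by
        rw [Real.mul_rpow (by positivity) ha'.le, Real.rpow_inv_rpow hu0.le hp]
      have e2 : (v ^ p⁻¹ * b) ^ p = v * b ^ p := by
        rw [Real.mul_rpow (by positivity) hb'.le, Real.rpow_inv_rpow hv0.le hp]
      have hsum : 0 ≤ (1 - μ) * a ^ p + μ * b ^ p := by
        have := Real.rpow_pos_of_pos ha' p
        have := Real.rpow_pos_of_pos hb' p
        nlinarith
      rw [e1, e2, ← Real.mul_rpow hS0.le hsum]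
      congr 1
      rw [h1μ, hμ]
      field_simp
  rw [hp0, hp1, hTp, harg, key]
  exact mul_le_mul_of_nonneg_left (hconc y₀ hy₀ y₁ hy₁ μ ⟨hμ0, hμ1⟩)
    (Real.rpow_nonneg hS0.le _)
end

section
/- Let Ω be a bounded convex set in ℝⁿ with non-empty interior, K = closure(Ω), s ∈ (0,1], μ ∈ [0,∞), and v ∈ Sⁿ⁻¹, with (s,μ) ≠ (1,0). Then the set Ω \ (sK − μv) has non-empty interior, where sK − μv = {s y − μ v | y ∈ K}. -/
open Set MeasureTheory

/-- For a convex set with nonempty interior, the closure equals the closure of the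
interior. -/
lemma closure_subset_closure_interior_of_convex {E : Type*} [NormedAddCommGroup E]
    [NormedSpace ℝ E] {Ω : Set E} (hΩ : Convex ℝ Ω) (hint : (interior Ω).Nonempty) :
    closure Ω ⊆ closure (interior Ω) := by
  obtain ⟨y, hy⟩ := hint
  intro x hx
  have hne : (nhdsWithin (1:ℝ) (Set.Ioo (0:ℝ) 1)).NeBot := by
    refine mem_closure_iff_nhdsWithin_neBot.mp ?_
    rw [closure_Ioo one_ne_zero.symm]
    exact ⟨zero_le_one, le_rfl⟩
  have htend : Filter.Tendsto (fun t : ℝ => t • x + (1 - t) • y)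
      (nhdsWithin (1:ℝ) (Set.Ioo (0:ℝ) 1)) (nhds x) := by
    have : Filter.Tendsto (fun t : ℝ => t • x + (1 - t) • y) (nhds 1) (nhds x) := by
      have hc : Continuous (fun t : ℝ => t • x + (1 - t) • y) := by continuity
      have := hc.tendsto 1
      simpa using this
    exact this.mono_left nhdsWithin_le_nhds
  refine mem_closure_of_tendsto htend ?_
  filter_upwards [self_mem_nhdsWithin] with t ht
  exact hΩ.combo_closure_interior_mem_interior hx hy ht.1.le (by linarith [ht.2])
    (by ring)

theorem stmt14 {n : ℕ} (Ω : Set (EuclideanSpace ℝ (Fin n))) (hΩ : Convex ℝ Ω)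
    (hb : Bornology.IsBounded Ω) (hint : (interior Ω).Nonempty)
    (s μ : ℝ) (hs : s ∈ Set.Ioc (0:ℝ) 1) (hμ : 0 ≤ μ)
    (v : EuclideanSpace ℝ (Fin n)) (hv : ‖v‖ = 1) (hsμ : (s, μ) ≠ (1, 0)) :
    (interior (Ω \ ((fun y => s • y - μ • v) '' closure Ω))).Nonempty := by
  obtain ⟨hs0, hs1⟩ := hs
  set K := closure Ω with hK
  set T := (fun y => s • y - μ • v) '' K with hT
  have hKcpt : IsCompact K := hb.isCompact_closure
  have hcont : Continuous (fun y : EuclideanSpace ℝ (Fin n) => s • y - μ • v) :=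
    (continuous_id.const_smul s).sub continuous_const
  have hTcpt : IsCompact T := hKcpt.image hcont
  have key : ¬ (interior Ω ⊆ T) := by
    intro hsub
    have hKT : K ⊆ T := by
      refine (closure_subset_closure_interior_of_convex hΩ hint).trans ?_
      exact closure_minimal hsub hTcpt.isClosed
    obtain ⟨p, hp⟩ := hint
    obtain ⟨ε, hε, hball⟩ := Metric.isOpen_iff.1 isOpen_interior p hp
    have hsubK : interior Ω ⊆ K := interior_subset.trans subset_closure
    set f : EuclideanSpace ℝ (Fin n) → ℝ := fun x => inner ℝ x v with hf
    have hfc : Continuous f := continuous_id.inner continuous_const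
    have hKne : K.Nonempty := ⟨p, hsubK hp⟩
    obtain ⟨x₀, hx₀K, hmax⟩ := hKcpt.exists_isMaxOn hKne hfc.continuousOn
    obtain ⟨x₁, hx₁K, hmin⟩ := hKcpt.exists_isMinOn hKne hfc.continuousOn
    -- the two probe points
    have hnrm : ‖(ε/2) • v‖ = ε/2 := by
      rw [norm_smul, hv, Real.norm_eq_abs, abs_of_nonneg (by linarith : (0:ℝ) ≤ ε/2)]
      ring
    have hpp : p + (ε/2) • v ∈ K := by
      refine hsubK (hball ?_)
      rw [Metric.mem_ball, dist_eq_norm]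
      simp only [add_sub_cancel_left]
      rw [hnrm]; linarith
    have hpm : p - (ε/2) • v ∈ K := by
      refine hsubK (hball ?_)
      rw [Metric.mem_ball, dist_eq_norm]
      simp only [sub_sub_cancel_left, norm_neg]
      rw [hnrm]; linarith
    have hvv : (inner ℝ v v : ℝ) = 1 := by
      rw [real_inner_self_eq_norm_sq, hv]; norm_num
    have hfpp : f (p + (ε/2) • v) = f p + ε/2 := by
      simp only [hf, inner_add_left, real_inner_smul_left, hvv]
      ring
    have hfpm : f (p - (ε/2) • v) = f p - ε/2 := by
      simp only [hf, inner_sub_left, real_inner_smul_left, hvv]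
      ring
    have hD : f x₀ - f x₁ ≥ ε := by
      have h1 : f p + ε/2 ≤ f x₀ := hfpp ▸ hmax hpp
      have h2 : f x₁ ≤ f p - ε/2 := hfpm ▸ hmin hpm
      linarith
    -- x₀ and x₁ lie in T
    obtain ⟨y₀, hy₀K, hy₀⟩ := hKT hx₀K
    obtain ⟨y₁, hy₁K, hy₁⟩ := hKT hx₁K
    have hfx₀ : f x₀ = s * f y₀ - μ := by
      rw [← hy₀]
      simp only [hf, inner_sub_left, real_inner_smul_left, hvv]
      ring
    have hfx₁ : f x₁ = s * f y₁ - μ := by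
      rw [← hy₁]
      simp only [hf, inner_sub_left, real_inner_smul_left, hvv]
      ring
    have hy₀le : f y₀ ≤ f x₀ := hmax hy₀K
    have hy₁ge : f x₁ ≤ f y₁ := hmin hy₁K
    rcases eq_or_lt_of_le hs1 with hseq | hslt
    · -- s = 1
      have hμ0 : μ ≠ 0 := by
        intro h; exact hsμ (by rw [hseq, h])
      have : f x₀ ≤ f x₀ - μ := by
        calc f x₀ = s * f y₀ - μ := hfx₀
        _ ≤ s * f x₀ - μ := by nlinarith
        _ = f x₀ - μ := by rw [hseq]; ring
      have : μ ≤ 0 := by linarith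
      exact hμ0 (le_antisymm this hμ)
    · -- s < 1
      have h1 : f x₀ ≤ s * f x₀ - μ := by nlinarith
      have h2 : s * f x₁ - μ ≤ f x₁ := by nlinarith
      nlinarith
  obtain ⟨x, hx, hxT⟩ := not_subset.1 key
  refine ⟨x, ?_⟩
  have hopen : IsOpen (interior Ω ∩ Tᶜ) := isOpen_interior.inter hTcpt.isClosed.isOpen_compl
  have hss : interior Ω ∩ Tᶜ ⊆ Ω \ T := fun z hz => ⟨interior_subset hz.1, hz.2⟩
  exact interior_maximal hss hopen ⟨hx, hxT⟩
end

section
/- Let K be a compact convex subset of ℝⁿ, α ∈ ℝ \ {0}, x₀, x₁ ∈ ℝⁿ, t₀, t₁ ∈ (0,∞), λ ∈ (0,1), and define K' = (t₁^α((λ/t₀^α + (1−λ)/t₁^α)K − λ(x₀/t₀^α − x₁/t₁^α))) ∩ (t₀^α((λ/t₀^α + (1−λ)/t₁^α)K + (1−λ)(x₀/t₀^α − x₁/t₁^α))). Then y ∈ K' if and only if there exist y₀, y₁ ∈ K with (1−λ)y₀ + λy₁ = y and (x₀−y₀)/t₀^α = (x₁−y₁)/t₁^α. -/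
open Set MeasureTheory

theorem stmt16 {n : ℕ} (K : Set (EuclideanSpace ℝ (Fin n)))
    (hKc : IsCompact K) (hKconv : Convex ℝ K)
    (α : ℝ) (hα : α ≠ 0) (x₀ x₁ : EuclideanSpace ℝ (Fin n)) (t₀ t₁ : ℝ)
    (ht₀ : 0 < t₀) (ht₁ : 0 < t₁) (lam : ℝ) (hlam : lam ∈ Set.Ioo (0:ℝ) 1)
    (y : EuclideanSpace ℝ (Fin n)) :
    (y ∈ ((fun z => (t₁ ^ α) •
            ((lam / t₀ ^ α + (1 - lam) / t₁ ^ α) • z -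
              lam • ((t₀ ^ α)⁻¹ • x₀ - (t₁ ^ α)⁻¹ • x₁))) '' K) ∩
          ((fun z => (t₀ ^ α) •
            ((lam / t₀ ^ α + (1 - lam) / t₁ ^ α) • z +
              (1 - lam) • ((t₀ ^ α)⁻¹ • x₀ - (t₁ ^ α)⁻¹ • x₁))) '' K)) ↔
      ∃ y₀ ∈ K, ∃ y₁ ∈ K, (1 - lam) • y₀ + lam • y₁ = y ∧
        (t₀ ^ α)⁻¹ • (x₀ - y₀) = (t₁ ^ α)⁻¹ • (x₁ - y₁) := by
  obtain ⟨hl0, hl1⟩ := hlam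
  have hA : (0:ℝ) < t₀ ^ α := Real.rpow_pos_of_pos ht₀ α
  have hB : (0:ℝ) < t₁ ^ α := Real.rpow_pos_of_pos ht₁ α
  set A := t₀ ^ α with hAdef
  set B := t₁ ^ α with hBdef
  have hS : (0:ℝ) < (1 - lam) * A + lam * B := by nlinarith
  constructor
  · rintro ⟨⟨z₁, hz₁, h1⟩, z₀, hz₀, h2⟩
    have key : ∀ i, B * z₁ i - A * z₀ i = B * x₀ i - A * x₁ i := by
      intro i
      have h1i := congrArg (fun v => v i) h1
      have h2i := congrArg (fun v => v i) h2
      simp only [PiLp.smul_apply, PiLp.add_apply, PiLp.sub_apply, smul_eq_mul] at h1i h2i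
      field_simp at h1i h2i
      have h : ((1 - lam) * A + lam * B) * (B * z₁ i - A * z₀ i)
          = ((1 - lam) * A + lam * B) * (B * x₀ i - A * x₁ i) := by
        linear_combination B * h1i - A * h2i
      exact mul_left_cancel₀ hS.ne' h
    refine ⟨z₁, hz₁, z₀, hz₀, PiLp.ext fun i => ?_, PiLp.ext fun i => ?_⟩
    · have h1i := congrArg (fun v => v i) h1
      simp only [PiLp.smul_apply, PiLp.add_apply, PiLp.sub_apply, smul_eq_mul] at h1i ⊢
      field_simp at h1i
      have h : (A * B) * ((1 - lam) * z₁ i + lam * z₀ i) = (A * B) * y i := by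
        linear_combination B * h1i - lam * B * key i
      exact mul_left_cancel₀ (by positivity) h
    · simp only [PiLp.smul_apply, PiLp.add_apply, PiLp.sub_apply, smul_eq_mul]
      field_simp
      linear_combination (- key i)
  · rintro ⟨y₀, hy₀, y₁, hy₁, hsum, hrel⟩
    have hrel' : ∀ i, B * (x₀ i - y₀ i) = A * (x₁ i - y₁ i) := by
      intro i
      have h := congrArg (fun v => v i) hrel
      simp only [PiLp.smul_apply, PiLp.sub_apply, smul_eq_mul] at h
      field_simp at h
      linear_combination h
    refine ⟨⟨y₀, hy₀, PiLp.ext fun i => ?_⟩, ⟨y₁, hy₁, PiLp.ext fun i => ?_⟩⟩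
    · have hsi := congrArg (fun v => v i) hsum
      simp only [PiLp.smul_apply, PiLp.add_apply, PiLp.sub_apply, smul_eq_mul] at hsi ⊢
      field_simp
      linear_combination A * hsi - lam * hrel' i
    · have hsi := congrArg (fun v => v i) hsum
      simp only [PiLp.smul_apply, PiLp.add_apply, PiLp.sub_apply, smul_eq_mul] at hsi ⊢
      field_simp
      linear_combination B * hsi + (1 - lam) * hrel' i
end
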